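/- Let (X,d) be a complete metric space, K ⊂ X compact, μ ∈ (0,1), and for each n ∈ ℕ let f_n : K → K satisfy d(f_n(x), f_n(y)) ≤ μ·d(x,y) for all x,y ∈ K. Then there exists x* ∈ K such that for every x ∈ K, the sequence f_1 ∘ f_2 ∘ ⋯ ∘ f_n (x) converges to x* as n → ∞. -/
import Mathlib


/-- The non-stationary composition `f₁ ∘ f₂ ∘ ⋯ ∘ fₙ`. -/
def nsComp {X : Type*} (f : ℕ → X → X) : ℕ → X → X
  | 0 => id
  | n + 1 => nsComp f n ∘ f (n + 1)

/-- non-stationary contraction mapping principle. If each `fₙ : K → K` is a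
`μ`-contraction on the compact set `K` (`μ < 1`) in a complete metric space, then there is
`x* ∈ K` with `f₁ ∘ ⋯ ∘ fₙ (x) → x*` for every `x ∈ K`. -/
theorem stmt9 {X : Type*} [MetricSpace X] [CompleteSpace X]
    {K : Set X} (hK : IsCompact K) (hne : K.Nonempty)
    {μ : ℝ} (hμ : μ ∈ Set.Ioo (0 : ℝ) 1)
    (f : ℕ → X → X) (hmaps : ∀ n, Set.MapsTo (f n) K K)
    (hcontr : ∀ n, ∀ x ∈ K, ∀ y ∈ K, dist (f n x) (f n y) ≤ μ * dist x y) :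
    ∃ xs ∈ K, ∀ x ∈ K,
      Filter.Tendsto (fun n => nsComp f n x) Filter.atTop (nhds xs) := by
  obtain ⟨hμ0, hμ1⟩ := hμ
  -- nsComp maps K to K
  have hmapsN : ∀ n, Set.MapsTo (nsComp f n) K K := by
    intro n
    induction n with
    | zero => exact Set.mapsTo_id K
    | succ n ih => exact ih.comp (hmaps (n + 1))
  -- nsComp contracts by μ^n
  have hcontrN : ∀ n, ∀ x ∈ K, ∀ y ∈ K,
      dist (nsComp f n x) (nsComp f n y) ≤ μ ^ n * dist x y := by
    intro n
    induction n with
    | zero => intro x _ y _; simp [nsComp]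
    | succ n ih =>
      intro x hx y hy
      have h1 := ih (f (n + 1) x) (hmaps (n + 1) hx) (f (n + 1) y) (hmaps (n + 1) hy)
      have h2 := hcontr (n + 1) x hx y hy
      calc dist (nsComp f (n + 1) x) (nsComp f (n + 1) y)
          = dist (nsComp f n (f (n + 1) x)) (nsComp f n (f (n + 1) y)) := rfl
        _ ≤ μ ^ n * dist (f (n + 1) x) (f (n + 1) y) := h1
        _ ≤ μ ^ n * (μ * dist x y) := by
            exact mul_le_mul_of_nonneg_left h2 (pow_nonneg hμ0.le n)
        _ = μ ^ (n + 1) * dist x y := by ring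
  obtain ⟨x0, hx0⟩ := hne
  obtain ⟨C, hC⟩ := Metric.isBounded_iff.mp hK.isBounded
  set g : ℕ → X := fun n => nsComp f n x0 with hg
  have hgK : ∀ n, g n ∈ K := fun n => hmapsN n hx0
  have hCauchy : CauchySeq g := by
    apply cauchySeq_of_le_geometric μ C hμ1
    intro n
    have h1 : dist (g n) (g (n + 1)) = dist (nsComp f n x0) (nsComp f n (f (n + 1) x0)) := rfl
    rw [h1]
    calc dist (nsComp f n x0) (nsComp f n (f (n + 1) x0))
        ≤ μ ^ n * dist x0 (f (n + 1) x0) := hcontrN n x0 hx0 _ (hmaps (n + 1) hx0)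
      _ ≤ μ ^ n * C := by
          exact mul_le_mul_of_nonneg_left (hC hx0 (hmaps (n + 1) hx0)) (pow_nonneg hμ0.le n)
      _ = C * μ ^ n := by ring
  obtain ⟨xs, hxs⟩ := cauchySeq_tendsto_of_complete hCauchy
  have hxsK : xs ∈ K := hK.isClosed.mem_of_tendsto hxs (Filter.Eventually.of_forall hgK)
  refine ⟨xs, hxsK, fun x hx => ?_⟩
  have hdist : Filter.Tendsto (fun n => dist (nsComp f n x) (g n)) Filter.atTop (nhds 0) := by
    have hpow : Filter.Tendsto (fun n => μ ^ n * dist x x0) Filter.atTop (nhds 0) := by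
      have := tendsto_pow_atTop_nhds_zero_of_lt_one hμ0.le hμ1
      simpa using this.mul_const (dist x x0)
    refine squeeze_zero (fun n => dist_nonneg) (fun n => ?_) hpow
    exact hcontrN n x hx x0 hx0
  have : Filter.Tendsto (fun n => dist (nsComp f n x) xs) Filter.atTop (nhds 0) := by
    have h2 : Filter.Tendsto (fun n => dist (g n) xs) Filter.atTop (nhds 0) :=
      tendsto_iff_dist_tendsto_zero.mp hxs
    refine squeeze_zero (fun n => dist_nonneg) (fun n => dist_triangle _ (g n) xs) ?_
    simpa using hdist.add h2
  exact tendsto_iff_dist_tendsto_zero.mpr this
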